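/- Let v ≥ 1 be an integer, ρ > 0 and λ̃ > 0. With α and α_k as below, R_k evaluated at the isotropic point λ = (λ̃, …, λ̃) equals F_{v+2}(ρ/λ̃)/F_v(ρ/λ̃) for every k ∈ {1,…,v}. -/

import Mathlib

open Real MeasureTheory

/-- Chi-squared cumulative distribution function with `ν` degrees of freedom. -/
noncomputable def chiCDF (ν x : ℝ) : ℝ :=
  ((2 : ℝ) ^ (ν / 2) * Real.Gamma (ν / 2))⁻¹ *
    ∫ t in (0 : ℝ)..x, t ^ (ν / 2 - 1) * Real.exp (-t / 2)

/-- `α(λ) = ∫_{B_v(ρ)} ∏_i (2πλ_i)^{-1/2} exp(−x_i²/(2λ_i)) dx`. -/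
noncomputable def alphaInt (v : ℕ) (ρ : ℝ) (lam : Fin v → ℝ) : ℝ :=
  ∫ x in {y : Fin v → ℝ | ∑ i, y i ^ 2 ≤ ρ},
    ∏ i, ((2 * Real.pi * lam i) ^ (-(1 : ℝ) / 2) *
      Real.exp (-(x i ^ 2) / (2 * lam i))) ∂volume

/-- `α_k(λ) = ∫_{B_v(ρ)} (x_k²/λ_k) ∏_i (2πλ_i)^{-1/2} exp(−x_i²/(2λ_i)) dx`. -/
noncomputable def alphaIntK (v : ℕ) (ρ : ℝ) (k : Fin v) (lam : Fin v → ℝ) : ℝ :=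
  ∫ x in {y : Fin v → ℝ | ∑ i, y i ^ 2 ≤ ρ},
    (x k ^ 2 / lam k) * ∏ i, ((2 * Real.pi * lam i) ^ (-(1 : ℝ) / 2) *
      Real.exp (-(x i ^ 2) / (2 * lam i))) ∂volume

/-- `R_k(λ) = α_k(λ)/α(λ)`. -/
noncomputable def Rfun (v : ℕ) (ρ : ℝ) (k : Fin v) (lam : Fin v → ℝ) : ℝ :=
  alphaIntK v ρ k lam / alphaInt v ρ lam

open Set

private lemma RA_isCompact_S (v : ℕ) (ρ : ℝ) :
    IsCompact {y : Fin v → ℝ | ∑ i, y i ^ 2 ≤ ρ} := by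
  have hcont : Continuous fun y : Fin v → ℝ => ∑ i, y i ^ 2 :=
    continuous_finset_sum _ fun i _ => (continuous_apply i).pow 2
  refine Metric.isCompact_of_isClosed_isBounded (isClosed_le hcont continuous_const) ?_
  refine (Metric.isBounded_iff_subset_closedBall 0).2 ⟨Real.sqrt ρ, fun y hy => ?_⟩
  rw [Metric.mem_closedBall, dist_zero_right]
  refine (pi_norm_le_iff_of_nonneg (Real.sqrt_nonneg ρ)).2 fun i => ?_
  rw [Real.norm_eq_abs, ← Real.sqrt_sq_eq_abs]
  refine Real.sqrt_le_sqrt ?_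
  exact le_trans (Finset.single_le_sum (f := fun j => y j ^ 2)
    (fun j _ => sq_nonneg _) (Finset.mem_univ i)) hy

private lemma RA_measurableSet_S (v : ℕ) (ρ : ℝ) :
    MeasurableSet {y : Fin v → ℝ | ∑ i, y i ^ 2 ≤ ρ} := by
  have hcont : Continuous fun y : Fin v → ℝ => ∑ i, y i ^ 2 :=
    continuous_finset_sum _ fun i _ => (continuous_apply i).pow 2
  exact measurableSet_le hcont.measurable measurable_const

private lemma RA_prod_eq (v : ℕ) (lamt : ℝ) (x : Fin v → ℝ) :
    (∏ i, ((2 * Real.pi * lamt) ^ (-(1 : ℝ) / 2) * Real.exp (-(x i ^ 2) / (2 * lamt))))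
      = ((2 * Real.pi * lamt) ^ (-(1 : ℝ) / 2)) ^ v *
        Real.exp (-(∑ i, x i ^ 2) / (2 * lamt)) := by
  rw [Finset.prod_mul_distrib, Finset.prod_const, Finset.card_univ, Fintype.card_fin]
  congr 1
  rw [← Real.exp_sum]
  congr 1
  rw [← Finset.sum_div]
  congr 1
  simp

private lemma RA_subst (v : ℕ) (hv : 1 ≤ v) (ρ lamt : ℝ) (hρ : 0 < ρ) (hl : 0 < lamt)
    (q : ℝ → ℝ) (hq : Continuous q) :
    ∫ y in (0:ℝ)..Real.sqrt ρ, (y : ℝ) ^ (v - 1) * q (y ^ 2)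
      = (lamt ^ ((v : ℝ) / 2) / 2) *
        ∫ t in (0:ℝ)..(ρ / lamt), t ^ ((v : ℝ) / 2 - 1) * q (lamt * t) := by
  have hsq : (0:ℝ) < Real.sqrt ρ := Real.sqrt_pos.2 hρ
  set g : ℝ → ℝ := fun t => t ^ ((v : ℝ) / 2 - 1) * q (lamt * t) with hg
  set f : ℝ → ℝ := fun y => y ^ 2 / lamt with hf
  have hpt : ∀ y : ℝ, 0 < y →
      (2 * y / lamt) • g (f y) = (2 * lamt ^ (-(v : ℝ) / 2)) * ((y : ℝ) ^ (v - 1) * q (y ^ 2)) := by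
    intro y hy
    have hq1 : lamt * (y ^ 2 / lamt) = y ^ 2 := by field_simp
    have h1 : (y ^ 2 / lamt : ℝ) ^ ((v : ℝ) / 2 - 1)
        = y ^ ((v : ℝ) - 2) * lamt ^ (-((v : ℝ) / 2 - 1)) := by
      rw [div_eq_mul_inv, Real.mul_rpow (by positivity) (by positivity),
        ← Real.rpow_natCast y 2, ← Real.rpow_mul hy.le,
        Real.inv_rpow hl.le, ← Real.rpow_neg hl.le]
      congr 1
      push_cast
      ring
    have h2 : (y : ℝ) ^ (v - 1) = y ^ ((v : ℝ) - 1) := by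
      rw [← Real.rpow_natCast y (v - 1), Nat.cast_sub hv, Nat.cast_one]
    rw [smul_eq_mul, hg, hf]
    simp only []
    rw [hq1, h1, h2, show ((v:ℝ) - 1) = 1 + ((v:ℝ) - 2) by ring, Real.rpow_add hy,
      Real.rpow_one, show (-(v:ℝ)/2) = (-1) + (-((v:ℝ)/2 - 1)) by ring, Real.rpow_add hl,
      Real.rpow_neg_one]
    ring
  have hcont_f : ContinuousOn f (uIcc (0:ℝ) (Real.sqrt ρ)) :=
    ((continuous_pow 2).div_const lamt).continuousOn
  have hff' : ∀ x ∈ Ioo (min (0:ℝ) (Real.sqrt ρ)) (max 0 (Real.sqrt ρ)),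
      HasDerivWithinAt f (2 * x / lamt) (Ioi x) x := by
    intro x _
    have : HasDerivAt f (2 * x / lamt) x := by
      simpa using (hasDerivAt_pow 2 x).div_const lamt
    exact this.hasDerivWithinAt
  have hg_cont : ContinuousOn g (f '' Ioo (min (0:ℝ) (Real.sqrt ρ)) (max 0 (Real.sqrt ρ))) := by
    rintro t ⟨y, hy, rfl⟩
    rw [min_eq_left hsq.le, max_eq_right hsq.le] at hy
    have hfy : 0 < f y := by
      have := hy.1
      positivity
    have : ContinuousAt g (f y) := by
      exact ((Real.continuousAt_rpow_const _ _ (Or.inl hfy.ne')).mul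
        ((hq.comp (continuous_mul_left lamt)).continuousAt))
    exact this.continuousWithinAt
  have hg1 : IntegrableOn g (f '' uIcc (0:ℝ) (Real.sqrt ρ)) := by
    have hsub : f '' uIcc (0:ℝ) (Real.sqrt ρ) ⊆ Icc 0 (ρ / lamt) := by
      rw [uIcc_of_le hsq.le]
      rintro t ⟨y, hy, rfl⟩
      have hy2 : y ^ 2 ≤ ρ := by
        have := pow_le_pow_left₀ hy.1 hy.2 2
        rwa [Real.sq_sqrt hρ.le] at this
      constructor
      · have := hy.1; positivity
      · exact div_le_div_of_nonneg_right hy2 hl.le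
    refine IntegrableOn.mono_set ?_ hsub
    have hrpow : IntegrableOn (fun t : ℝ => t ^ ((v : ℝ) / 2 - 1)) (Icc 0 (ρ / lamt)) := by
      rw [integrableOn_Icc_iff_integrableOn_Ioc]
      refine (intervalIntegral.intervalIntegrable_rpow' ?_).1
      have h1 : (1:ℝ) ≤ (v:ℝ) := by exact_mod_cast hv
      linarith
    exact hrpow.mul_continuousOn (hq.comp (continuous_mul_left lamt)).continuousOn isCompact_Icc
  have h0ae : ∀ᵐ y : ℝ, y ≠ 0 := compl_mem_ae_iff.2 (measure_singleton 0)
  have hg2 : IntegrableOn (fun y => (2 * y / lamt) • g (f y)) (uIcc (0:ℝ) (Real.sqrt ρ)) := by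
    rw [uIcc_of_le hsq.le]
    have hconth : Continuous fun y : ℝ =>
        (2 * lamt ^ (-(v : ℝ) / 2)) * ((y : ℝ) ^ (v - 1) * q (y ^ 2)) := by
      continuity
    refine (hconth.integrableOn_Icc).congr ?_
    filter_upwards [ae_restrict_mem measurableSet_Icc, ae_restrict_of_ae h0ae] with y hy hy0
    exact (hpt y (lt_of_le_of_ne hy.1 (Ne.symm hy0))).symm
  have key := intervalIntegral.integral_comp_smul_deriv''' (a := (0:ℝ)) (b := Real.sqrt ρ)
    hcont_f hff' hg_cont hg1 hg2
  simp only [Function.comp] at key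
  have hf0 : f 0 = 0 := by simp [hf]
  have hfs : f (Real.sqrt ρ) = ρ / lamt := by simp [hf, Real.sq_sqrt hρ.le]
  have heq : (∫ y in (0:ℝ)..Real.sqrt ρ, (2 * y / lamt) • g (f y))
      = ∫ y in (0:ℝ)..Real.sqrt ρ,
          (2 * lamt ^ (-(v : ℝ) / 2)) * ((y : ℝ) ^ (v - 1) * q (y ^ 2)) := by
    refine intervalIntegral.integral_congr_ae ?_
    filter_upwards with y hy
    rw [uIoc_of_le hsq.le] at hy
    exact hpt y hy.1
  have h9 : (2 * lamt ^ (-(v : ℝ) / 2)) * (∫ y in (0:ℝ)..Real.sqrt ρ, (y:ℝ) ^ (v-1) * q (y ^ 2))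
      = ∫ t in (0:ℝ)..(ρ / lamt), g t := by
    rw [← intervalIntegral.integral_const_mul, ← heq, key, hf0, hfs]
  have hlv : (0:ℝ) < lamt ^ ((v : ℝ) / 2) := Real.rpow_pos_of_pos hl _
  calc ∫ y in (0:ℝ)..Real.sqrt ρ, (y:ℝ) ^ (v-1) * q (y ^ 2)
      = (lamt ^ ((v : ℝ) / 2) / 2) * ((2 * lamt ^ (-(v : ℝ) / 2)) *
          ∫ y in (0:ℝ)..Real.sqrt ρ, (y:ℝ) ^ (v-1) * q (y ^ 2)) := by
        rw [show (-(v:ℝ)/2) = -((v:ℝ)/2) by ring, Real.rpow_neg hl.le]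
        field_simp
    _ = (lamt ^ ((v : ℝ) / 2) / 2) * ∫ t in (0:ℝ)..(ρ / lamt), g t := by rw [h9]

private lemma RA_key (v : ℕ) (hv : 1 ≤ v) (ρ lamt : ℝ) (hρ : 0 < ρ) (hl : 0 < lamt)
    (q : ℝ → ℝ) (hq : Continuous q) :
    (∫ x in {y : Fin v → ℝ | ∑ i, y i ^ 2 ≤ ρ}, q (∑ i, x i ^ 2) ∂volume)
      = ((v : ℝ) * (Real.sqrt π ^ v / Real.Gamma ((v : ℝ) / 2 + 1))) *
        ((lamt ^ ((v : ℝ) / 2) / 2) *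
          ∫ t in (0:ℝ)..(ρ / lamt), t ^ ((v : ℝ) / 2 - 1) * q (lamt * t)) := by
  have hsubst := RA_subst v hv ρ lamt hρ hl q hq
  haveI : Nonempty (Fin v) := ⟨⟨0, hv⟩⟩
  have hsq : (0:ℝ) < Real.sqrt ρ := Real.sqrt_pos.2 hρ
  set S : Set (Fin v → ℝ) := {y | ∑ i, y i ^ 2 ≤ ρ} with hS
  set F : ℝ → ℝ := (Set.Icc (0:ℝ) (Real.sqrt ρ)).indicator (fun r => q (r ^ 2)) with hF
  have h1 : (∫ x in S, q (∑ i, x i ^ 2) ∂volume)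
      = ∫ y : Fin v → ℝ, S.indicator (fun y => q (∑ i, y i ^ 2)) y ∂volume :=
    (integral_indicator (RA_measurableSet_S v ρ)).symm
  have hme := EuclideanSpace.volume_preserving_symm_measurableEquiv_toLp (Fin v)
  have h2 : ∫ y : Fin v → ℝ, S.indicator (fun y => q (∑ i, y i ^ 2)) y ∂volume
      = ∫ x : EuclideanSpace ℝ (Fin v),
          S.indicator (fun y => q (∑ i, y i ^ 2))
            ((MeasurableEquiv.toLp 2 (Fin v → ℝ)).symm x) ∂volume :=
    (hme.integral_comp (MeasurableEquiv.measurableEmbedding _) _).symm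
  have h3 : ∀ x : EuclideanSpace ℝ (Fin v),
      S.indicator (fun y => q (∑ i, y i ^ 2)) ((MeasurableEquiv.toLp 2 (Fin v → ℝ)).symm x)
        = F ‖x‖ := by
    intro x
    have hex : (MeasurableEquiv.toLp 2 (Fin v → ℝ)).symm x = fun i => x i := rfl
    have hnx : ‖x‖ ^ 2 = ∑ i, x i ^ 2 := by
      rw [EuclideanSpace.norm_eq, Real.sq_sqrt (by positivity)]
      simp [Real.norm_eq_abs, sq_abs]
    by_cases hx : (fun i => x i) ∈ S
    · rw [hex, Set.indicator_of_mem hx, hF, Set.indicator_of_mem]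
      · rw [hnx]
      · refine ⟨norm_nonneg x, ?_⟩
        have : ‖x‖ ^ 2 ≤ ρ := by rw [hnx]; exact hx
        calc ‖x‖ = Real.sqrt (‖x‖ ^ 2) := (Real.sqrt_sq (norm_nonneg x)).symm
          _ ≤ Real.sqrt ρ := Real.sqrt_le_sqrt this
    · rw [hex, Set.indicator_of_notMem hx, hF, Set.indicator_of_notMem]
      intro hmem
      refine hx ?_
      have : ‖x‖ ^ 2 ≤ ρ := by
        calc ‖x‖ ^ 2 ≤ Real.sqrt ρ ^ 2 := by
              exact pow_le_pow_left₀ (norm_nonneg x) hmem.2 2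
          _ = ρ := Real.sq_sqrt hρ.le
      show ∑ i, x i ^ 2 ≤ ρ
      rwa [← hnx]
  haveI : Nontrivial (EuclideanSpace ℝ (Fin v)) := by
    refine ⟨0, EuclideanSpace.single ⟨0, hv⟩ 1, ?_⟩
    intro h
    have := congrArg (fun z : EuclideanSpace ℝ (Fin v) => z ⟨0, hv⟩) h.symm
    simp [EuclideanSpace.single] at this
  have h4 := MeasureTheory.integral_fun_norm_addHaar
    (volume : Measure (EuclideanSpace ℝ (Fin v))) F
  rw [finrank_euclideanSpace_fin] at h4
  have h5 : (volume (Metric.ball (0 : EuclideanSpace ℝ (Fin v)) 1)).toReal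
      = Real.sqrt π ^ v / Real.Gamma ((v : ℝ) / 2 + 1) := by
    rw [EuclideanSpace.volume_ball, Fintype.card_fin]
    simp only [ENNReal.ofReal_one, one_pow, one_mul]
    rw [ENNReal.toReal_ofReal]
    have : 0 < Real.Gamma ((v : ℝ) / 2 + 1) := Real.Gamma_pos_of_pos (by positivity)
    positivity
  have h6 : (∫ y in Ioi (0:ℝ), y ^ (v - 1) • F y)
      = ∫ y in (0:ℝ)..Real.sqrt ρ, (y:ℝ) ^ (v - 1) * q (y ^ 2) := by
    have hptw : ∀ y : ℝ, y ^ (v-1) • F y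
        = (Set.Icc (0:ℝ) (Real.sqrt ρ)).indicator (fun y => y ^ (v-1) * q (y ^ 2)) y := by
      intro y
      rw [hF]
      by_cases h : y ∈ Set.Icc (0:ℝ) (Real.sqrt ρ)
      · rw [Set.indicator_of_mem h, Set.indicator_of_mem h, smul_eq_mul]
      · rw [Set.indicator_of_notMem h, Set.indicator_of_notMem h, smul_zero]
    simp_rw [hptw]
    rw [setIntegral_indicator measurableSet_Icc,
      show Ioi (0:ℝ) ∩ Set.Icc 0 (Real.sqrt ρ) = Set.Ioc (0:ℝ) (Real.sqrt ρ) by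
        ext y; simp only [Set.mem_inter_iff, Set.mem_Ioi, Set.mem_Icc, Set.mem_Ioc]
        constructor
        · rintro ⟨h1, _, h3⟩; exact ⟨h1, h3⟩
        · rintro ⟨h1, h3⟩; exact ⟨h1, h1.le, h3⟩,
      ← intervalIntegral.integral_of_le hsq.le]
  rw [h1, h2]
  simp_rw [h3]
  rw [h4, measureReal_def, h5, h6, hsubst, nsmul_eq_mul, smul_eq_mul]
  ring

private lemma RA_swap (v : ℕ) (ρ lamt : ℝ) (j k : Fin v) :
    alphaIntK v ρ k (fun _ => lamt) = alphaIntK v ρ j (fun _ => lamt) := by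
  classical
  have hSm := RA_measurableSet_S v ρ
  set S : Set (Fin v → ℝ) := {y | ∑ i, y i ^ 2 ≤ ρ} with hS
  set σ : Fin v ≃ Fin v := Equiv.swap j k with hσ
  set T := MeasurableEquiv.piCongrLeft (fun _ : Fin v => ℝ) σ with hTdef
  have hmp : MeasurePreserving T volume volume :=
    MeasureTheory.volume_measurePreserving_piCongrLeft (fun _ : Fin v => ℝ) σ
  have hTx : ∀ (x : Fin v → ℝ) (i : Fin v), T x i = x (σ i) := by
    intro x i
    conv_lhs => rw [show i = σ (σ.symm i) by simp]
    rw [hTdef, MeasurableEquiv.piCongrLeft_apply_apply]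
    congr 1
  set C : ℝ := (2 * Real.pi * lamt) ^ (-(1 : ℝ) / 2) with hC
  set P : (Fin v → ℝ) → ℝ := fun x => ∏ i, (C * Real.exp (-(x i ^ 2) / (2 * lamt))) with hP
  have hPT : ∀ x : Fin v → ℝ, P (T x) = P x := by
    intro x
    rw [hP]
    simp only [hTx]
    exact Equiv.prod_comp σ (fun i => C * Real.exp (-(x i ^ 2) / (2 * lamt)))
  have hsumT : ∀ x : Fin v → ℝ, ∑ i, (T x) i ^ 2 = ∑ i, x i ^ 2 := by
    intro x
    simp only [hTx]
    exact Equiv.sum_comp σ (fun i => x i ^ 2)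
  have hTk : ∀ x : Fin v → ℝ, T x k = x j := by
    intro x
    rw [hTx, hσ, Equiv.swap_apply_right]
  show (∫ x in S, (x k ^ 2 / lamt) * P x ∂volume) = ∫ x in S, (x j ^ 2 / lamt) * P x ∂volume
  rw [← integral_indicator hSm, ← integral_indicator hSm,
    ← hmp.integral_comp T.measurableEmbedding (S.indicator fun x => (x k ^ 2 / lamt) * P x)]
  congr 1
  funext x
  by_cases hx : x ∈ S
  · have hTmem : T x ∈ S := by
      show ∑ i, (T x) i ^ 2 ≤ ρ
      rw [hsumT]; exact hx
    rw [Set.indicator_of_mem hTmem, Set.indicator_of_mem hx, hTk, hPT]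
  · have hTmem : T x ∉ S := by
      intro h
      refine hx ?_
      show ∑ i, x i ^ 2 ≤ ρ
      rw [← hsumT x]; exact h
    rw [Set.indicator_of_notMem hTmem, Set.indicator_of_notMem hx]

private lemma RA_const (v : ℕ) (hv : 1 ≤ v) (lamt : ℝ) (hl : 0 < lamt) :
    ((v : ℝ) * (Real.sqrt π ^ v / Real.Gamma ((v : ℝ) / 2 + 1))) *
      ((lamt ^ ((v : ℝ) / 2) / 2) * ((2 * π * lamt) ^ (-(1 : ℝ) / 2)) ^ v)
    = ((2 : ℝ) ^ ((v : ℝ) / 2) * Real.Gamma ((v : ℝ) / 2))⁻¹ := by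
  have hπ := Real.pi_pos
  have hvpos : (0 : ℝ) < v := by exact_mod_cast hv
  have hb : ((2 * π * lamt) ^ (-(1 : ℝ) / 2)) ^ v = ((2 * π * lamt) ^ ((v : ℝ) / 2))⁻¹ := by
    rw [← Real.rpow_natCast ((2 * π * lamt) ^ (-(1 : ℝ) / 2)) v,
      ← Real.rpow_mul (by positivity)]
    rw [show (-(1 : ℝ) / 2 * (v : ℝ)) = -((v : ℝ) / 2) by ring, Real.rpow_neg (by positivity)]
  have hs : Real.sqrt π ^ v = π ^ ((v : ℝ) / 2) := by
    rw [Real.sqrt_eq_rpow, ← Real.rpow_natCast (π ^ ((1 : ℝ) / 2)) v,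
      ← Real.rpow_mul Real.pi_pos.le]
    congr 1; ring
  have hG : Real.Gamma ((v : ℝ) / 2 + 1) = ((v : ℝ) / 2) * Real.Gamma ((v : ℝ) / 2) :=
    Real.Gamma_add_one (by positivity)
  have hGpos : 0 < Real.Gamma ((v : ℝ) / 2) := Real.Gamma_pos_of_pos (by positivity)
  have hsplit : (2 * π * lamt : ℝ) ^ ((v : ℝ) / 2)
      = 2 ^ ((v : ℝ) / 2) * π ^ ((v : ℝ) / 2) * lamt ^ ((v : ℝ) / 2) := by
    rw [Real.mul_rpow (by positivity) hl.le, Real.mul_rpow (by positivity) hπ.le]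
  have h2 : (0 : ℝ) < 2 ^ ((v : ℝ) / 2) := by positivity
  have h3 : (0 : ℝ) < π ^ ((v : ℝ) / 2) := by positivity
  have h4 : (0 : ℝ) < lamt ^ ((v : ℝ) / 2) := by positivity
  rw [hb, hs, hG, hsplit]
  field_simp

private lemma RA_alpha (v : ℕ) (hv : 1 ≤ v) (ρ lamt : ℝ) (hρ : 0 < ρ) (hl : 0 < lamt) :
    alphaInt v ρ (fun _ => lamt) = chiCDF v (ρ / lamt) := by
  set q : ℝ → ℝ := fun t => ((2 * Real.pi * lamt) ^ (-(1 : ℝ) / 2)) ^ v *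
    Real.exp (-t / (2 * lamt)) with hq
  have hqc : Continuous q := by fun_prop
  have hmain : alphaInt v ρ (fun _ => lamt)
      = ∫ x in {y : Fin v → ℝ | ∑ i, y i ^ 2 ≤ ρ}, q (∑ i, x i ^ 2) ∂volume := by
    unfold alphaInt
    refine setIntegral_congr_fun (RA_measurableSet_S v ρ) (fun x _ => ?_)
    exact RA_prod_eq v lamt x
  rw [hmain, RA_key v hv ρ lamt hρ hl q hqc]
  have hin : ∀ t : ℝ, t ^ ((v:ℝ)/2 - 1) * q (lamt * t)
      = ((2 * Real.pi * lamt) ^ (-(1 : ℝ) / 2)) ^ v *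
        (t ^ ((v:ℝ)/2 - 1) * Real.exp (-t/2)) := by
    intro t
    rw [hq]
    simp only []
    rw [show -(lamt * t) / (2 * lamt) = -t / 2 by field_simp]
    ring
  simp_rw [hin]
  rw [intervalIntegral.integral_const_mul]
  unfold chiCDF
  rw [← RA_const v hv lamt hl]
  ring

private lemma RA_alphaK (v : ℕ) (hv : 1 ≤ v) (ρ lamt : ℝ) (hρ : 0 < ρ) (hl : 0 < lamt)
    (k : Fin v) :
    alphaIntK v ρ k (fun _ => lamt) = chiCDF ((v : ℝ) + 2) (ρ / lamt) := by
  have hπ := Real.pi_pos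
  have hvpos : (0:ℝ) < v := by exact_mod_cast hv
  have hspos : (0:ℝ) < ρ / lamt := div_pos hρ hl
  set q : ℝ → ℝ := fun t => (t / lamt) * (((2 * Real.pi * lamt) ^ (-(1 : ℝ) / 2)) ^ v *
    Real.exp (-t / (2 * lamt))) with hq
  have hqc : Continuous q := by fun_prop
  have hintg : ∀ j : Fin v, IntegrableOn (fun x : Fin v → ℝ => (x j ^ 2 / lamt) *
      ∏ i, ((2 * Real.pi * lamt) ^ (-(1 : ℝ) / 2) * Real.exp (-(x i ^ 2) / (2 * lamt))))
      {y : Fin v → ℝ | ∑ i, y i ^ 2 ≤ ρ} := by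
    intro j
    refine (Continuous.continuousOn ?_).integrableOn_compact (RA_isCompact_S v ρ)
    fun_prop
  have hsum0 : ∑ j : Fin v, alphaIntK v ρ j (fun _ => lamt)
      = ∫ x in {y : Fin v → ℝ | ∑ i, y i ^ 2 ≤ ρ}, q (∑ i, x i ^ 2) ∂volume := by
    unfold alphaIntK
    rw [← integral_finset_sum _ (fun j _ => hintg j)]
    refine setIntegral_congr_fun (RA_measurableSet_S v ρ) (fun x _ => ?_)
    rw [← Finset.sum_mul, ← Finset.sum_div, hq, RA_prod_eq v lamt x]
  have hswap : ∀ j : Fin v, alphaIntK v ρ j (fun _ => lamt)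
      = alphaIntK v ρ k (fun _ => lamt) := fun j => RA_swap v ρ lamt k j
  have hsum1 : (v:ℝ) * alphaIntK v ρ k (fun _ => lamt)
      = ∫ x in {y : Fin v → ℝ | ∑ i, y i ^ 2 ≤ ρ}, q (∑ i, x i ^ 2) ∂volume := by
    rw [← hsum0, Finset.sum_congr rfl (fun j _ => hswap j), Finset.sum_const,
      Finset.card_univ, Fintype.card_fin, nsmul_eq_mul]
  rw [RA_key v hv ρ lamt hρ hl q hqc] at hsum1
  have hae : (∫ t in (0:ℝ)..(ρ/lamt), t ^ ((v:ℝ)/2 - 1) * q (lamt * t))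
      = ∫ t in (0:ℝ)..(ρ/lamt), ((2 * Real.pi * lamt) ^ (-(1 : ℝ) / 2)) ^ v *
          (t ^ (((v:ℝ) + 2)/2 - 1) * Real.exp (-t/2)) := by
    refine intervalIntegral.integral_congr_ae ?_
    filter_upwards with t ht
    rw [uIoc_of_le hspos.le] at ht
    have ht0 : 0 < t := ht.1
    rw [hq]
    simp only []
    rw [show lamt * t / lamt = t by field_simp,
      show -(lamt * t) / (2 * lamt) = -t / 2 by field_simp,
      show ((v:ℝ) + 2)/2 - 1 = ((v:ℝ)/2 - 1) + 1 by ring, Real.rpow_add ht0, Real.rpow_one]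
    ring
  rw [hae, intervalIntegral.integral_const_mul] at hsum1
  have hGpos : 0 < Real.Gamma ((v : ℝ) / 2) := Real.Gamma_pos_of_pos (by positivity)
  have h2 : (0 : ℝ) < 2 ^ ((v : ℝ) / 2) := by positivity
  have hconst2 : ((2:ℝ) ^ (((v:ℝ)+2)/2) * Real.Gamma (((v:ℝ)+2)/2))⁻¹
      = ((v:ℝ))⁻¹ * ((2:ℝ) ^ ((v:ℝ)/2) * Real.Gamma ((v:ℝ)/2))⁻¹ := by
    rw [show ((v:ℝ)+2)/2 = (v:ℝ)/2 + 1 by ring, Real.rpow_add two_pos, Real.rpow_one,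
      Real.Gamma_add_one (by positivity)]
    field_simp
  have halpha : alphaIntK v ρ k (fun _ => lamt)
      = (v:ℝ)⁻¹ * ((v:ℝ) * alphaIntK v ρ k (fun _ => lamt)) := by
    field_simp
  rw [halpha, hsum1]
  unfold chiCDF
  rw [hconst2, ← RA_const v hv lamt hl]
  ring

/-- At the isotropic point `λ = (λ̃,…,λ̃)`, `R_k = F_{v+2}(ρ/λ̃)/F_v(ρ/λ̃)`. -/
theorem Rfun_isotropic (v : ℕ) (hv : 1 ≤ v) (ρ lamt : ℝ) (hρ : 0 < ρ)
    (hl : 0 < lamt) (k : Fin v) :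
    Rfun v ρ k (fun _ => lamt) = chiCDF (v + 2) (ρ / lamt) / chiCDF v (ρ / lamt) := by
  unfold Rfun
  rw [RA_alphaK v hv ρ lamt hρ hl k, RA_alpha v hv ρ lamt hρ hl]
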